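/- Let P be an even positive integer and Q an odd positive integer with gcd(P,Q) = 1 and 0 < Q < P/3. If α ≥ 2 is an integer and P/Q = 2α + 1/(β_1 + 1/(... + 1/β_k)) (a continued fraction with nonzero integer entries), then P/(P-Q) = 2 + 1/(-1 + 1/(-(2α-2) + 1/(-β_1 + 1/(... + 1/(-β_k))))). -/
import Mathlib


/-- Value of a continued fraction `[a₁, …, aₙ] = a₁ + 1/(a₂ + 1/(⋯ + 1/aₙ))`,
evaluated in `ℚ` (with the convention `cfVal [] = 0`, so `cfVal [a] = a`). -/
def cfVal : List ℤ → ℚ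
  | [] => 0
  | a :: l => a + (cfVal l)⁻¹

lemma cfVal_neg (l : List ℤ) : cfVal (l.map (fun b => -b)) = - cfVal l := by
  induction l with
  | nil => simp [cfVal]
  | cons a l ih => simp [cfVal, ih, inv_neg]; ring

/-- Case 0 < Q < P/3: if P/Q = [2α, β₁, …, β_k] with α ≥ 2 then
P/(P-Q) = [2, -1, -(2α-2), -β₁, …, -β_k]. -/
theorem complement_expansion_small_Q (P Q : ℤ) (hP : Even P) (hP0 : 0 < P)
    (hQ : Odd Q) (hQ0 : 0 < Q) (hco : IsCoprime P Q)
    (h3 : 3 * Q < P)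
    (α : ℤ) (hα : 2 ≤ α) (β : List ℤ) (hβ : ∀ b ∈ β, b ≠ 0)
    (h : cfVal ((2 * α) :: β) = (P : ℚ) / Q) :
    cfVal (2 :: (-1) :: (-(2 * α - 2)) :: β.map (fun b => -b)) = (P : ℚ) / (P - Q) := by
  have hQQ : (Q : ℚ) ≠ 0 := by exact_mod_cast hQ0.ne'
  have h2QP : (2 * Q - P : ℚ) ≠ 0 := by
    have : 2 * Q - P < 0 := by linarith
    exact_mod_cast this.ne
  have hPQ : (P - Q : ℚ) ≠ 0 := by
    have : (0:ℤ) < P - Q := by linarith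
    exact_mod_cast this.ne'
  simp only [cfVal, cfVal_neg] at h ⊢
  have hx : (cfVal β)⁻¹ = (P : ℚ) / Q - 2 * α := by
    push_cast at h ⊢; linarith
  rw [inv_neg, hx]
  have e1 : (-(2 * α - 2 : ℤ) : ℚ) + -((P : ℚ) / Q - 2 * α) = (2 * Q - P) / Q := by
    push_cast; field_simp; ring
  push_cast at e1 ⊢
  rw [e1]
  have e2 : (-1 : ℚ) + ((2 * (Q:ℚ) - P) / Q)⁻¹ = ((P : ℚ) - Q) / (2 * Q - P) := by
    field_simp; ring
  rw [e2]
  push_cast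
  field_simp
  ring
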